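/- Let 0 < r < 1. The solutions ζ of ζ³(ζ⁶ - r⁶)/(r⁶ζ⁶ - 1) = 1 are: ζ = -1, ζ = 1/2 ± i√3/2, together with the cubic roots of (1 + r⁶ ± i√(4 - (1+r⁶)²))/2; all nine solutions have modulus 1. -/

import Mathlib

open Complex

/-- The solutions of ζ³(ζ⁶-r⁶)/(r⁶ζ⁶-1) = 1 are ζ = -1, ζ = 1/2 ± i√3/2, together
with the cube roots of (1+r⁶ ± i√(4-(1+r⁶)²))/2; all nine have modulus 1. -/
theorem nine_solutions (r : ℝ) (hr0 : 0 < r) (hr1 : r < 1) :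
    ∀ ζ : ℂ, (r : ℂ) ^ 6 * ζ ^ 6 ≠ 1 →
      ((ζ ^ 3 * (ζ ^ 6 - (r : ℂ) ^ 6) / ((r : ℂ) ^ 6 * ζ ^ 6 - 1) = 1 ↔
        ζ = -1 ∨
        ζ = 1 / 2 + Complex.I * (Real.sqrt 3 : ℝ) / 2 ∨
        ζ = 1 / 2 - Complex.I * (Real.sqrt 3 : ℝ) / 2 ∨
        ζ ^ 3 = (1 + (r : ℂ) ^ 6 + Complex.I * (Real.sqrt (4 - (1 + r ^ 6) ^ 2) : ℝ)) / 2 ∨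
        ζ ^ 3 = (1 + (r : ℂ) ^ 6 - Complex.I * (Real.sqrt (4 - (1 + r ^ 6) ^ 2) : ℝ)) / 2) ∧
      (ζ ^ 3 * (ζ ^ 6 - (r : ℂ) ^ 6) / ((r : ℂ) ^ 6 * ζ ^ 6 - 1) = 1 →
        ‖ζ‖ = 1)) := by
  have hr6 : r ^ 6 < 1 := pow_lt_one₀ hr0.le hr1 (by norm_num)
  have hr6' : 0 < r ^ 6 := pow_pos hr0 6
  have hs2 : (0:ℝ) ≤ 4 - (1 + r ^ 6) ^ 2 := by nlinarith
  -- abbreviations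
  set u : ℂ := ((Real.sqrt 3 : ℝ) : ℂ) with hu
  set t : ℂ := ((Real.sqrt (4 - (1 + r ^ 6) ^ 2) : ℝ) : ℂ) with htdef
  have hIu : (I * u) ^ 2 = -3 := by
    rw [mul_pow, I_sq, hu, ← ofReal_pow, Real.sq_sqrt (by norm_num)]
    norm_num
  have hIt : (I * t) ^ 2 = (1 + (r:ℂ) ^ 6) ^ 2 - 4 := by
    rw [mul_pow, I_sq, htdef, ← ofReal_pow, Real.sq_sqrt hs2]
    push_cast; ring
  intro ζ h
  have hd : (r:ℂ) ^ 6 * ζ ^ 6 - 1 ≠ 0 := sub_ne_zero.mpr h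
  have hA : (ζ + 1) * (ζ - (1 / 2 + I * u / 2)) * (ζ - (1 / 2 - I * u / 2))
      = ζ ^ 3 + 1 := by
    linear_combination (-(ζ + 1) / 4) * hIu
  have hB : (ζ ^ 3 - (1 + (r:ℂ) ^ 6 + I * t) / 2) * (ζ ^ 3 - (1 + (r:ℂ) ^ 6 - I * t) / 2)
      = ζ ^ 6 - (1 + (r:ℂ) ^ 6) * ζ ^ 3 + 1 := by
    linear_combination (-(1:ℂ) / 4) * hIt
  have key : ζ ^ 3 * (ζ ^ 6 - (r : ℂ) ^ 6) / ((r : ℂ) ^ 6 * ζ ^ 6 - 1) = 1 ↔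
      (ζ ^ 3 + 1) * (ζ ^ 6 - (1 + (r:ℂ) ^ 6) * ζ ^ 3 + 1) = 0 := by
    rw [div_eq_one_iff_eq hd]
    constructor
    · intro h1; linear_combination h1
    · intro h1; linear_combination h1
  have keyiff : ζ ^ 3 * (ζ ^ 6 - (r : ℂ) ^ 6) / ((r : ℂ) ^ 6 * ζ ^ 6 - 1) = 1 ↔
        ζ = -1 ∨
        ζ = 1 / 2 + Complex.I * (Real.sqrt 3 : ℝ) / 2 ∨
        ζ = 1 / 2 - Complex.I * (Real.sqrt 3 : ℝ) / 2 ∨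
        ζ ^ 3 = (1 + (r : ℂ) ^ 6 + Complex.I * (Real.sqrt (4 - (1 + r ^ 6) ^ 2) : ℝ)) / 2 ∨
        ζ ^ 3 = (1 + (r : ℂ) ^ 6 - Complex.I * (Real.sqrt (4 - (1 + r ^ 6) ^ 2) : ℝ)) / 2 := by
    rw [key, ← hA, ← hB, mul_eq_zero, mul_eq_zero, mul_eq_zero, mul_eq_zero]
    constructor
    · rintro ((((h1 | h1) | h1) | (h1 | h1)))
      · exact Or.inl (by linear_combination h1)
      · exact Or.inr (Or.inl (by linear_combination h1))
      · exact Or.inr (Or.inr (Or.inl (by linear_combination h1)))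
      · exact Or.inr (Or.inr (Or.inr (Or.inl (sub_eq_zero.mp h1))))
      · exact Or.inr (Or.inr (Or.inr (Or.inr (sub_eq_zero.mp h1))))
    · rintro (h1 | h1 | h1 | h1 | h1)
      · exact Or.inl (Or.inl (Or.inl (by rw [h1]; ring)))
      · exact Or.inl (Or.inl (Or.inr (by rw [h1]; ring)))
      · exact Or.inl (Or.inr (by rw [h1]; ring))
      · exact Or.inr (Or.inl (by rw [h1]; ring))
      · exact Or.inr (Or.inr (by rw [h1]; ring))
  refine ⟨keyiff, fun heq => ?_⟩
  -- modulus part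
  have hcube : ζ ^ 3 = -1 ∨ ζ ^ 3 = (1 + (r:ℂ) ^ 6 + I * t) / 2 ∨
      ζ ^ 3 = (1 + (r:ℂ) ^ 6 - I * t) / 2 := by
    have h0 := key.mp heq
    rcases mul_eq_zero.mp h0 with h1 | h1
    · exact Or.inl (by linear_combination h1)
    · rw [← hB, mul_eq_zero] at h1
      rcases h1 with h1 | h1
      · exact Or.inr (Or.inl (sub_eq_zero.mp h1))
      · exact Or.inr (Or.inr (sub_eq_zero.mp h1))
  have habs3 : ‖ζ‖ ^ 3 = 1 := by
    rw [← norm_pow]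
    have hwprod : ((1 + (r:ℂ) ^ 6 + I * t) / 2) * ((1 + (r:ℂ) ^ 6 - I * t) / 2) = 1 := by
      linear_combination (-(1:ℂ) / 4) * hIt
    have hconj : (starRingEnd ℂ) ((1 + (r:ℂ) ^ 6 + I * t) / 2)
        = (1 + (r:ℂ) ^ 6 - I * t) / 2 := by
      rw [htdef]
      simp [map_div₀, map_add, map_mul, conj_I, Complex.conj_ofReal, map_ofNat]
      ring
    have habsw : ‖(1 + (r:ℂ) ^ 6 + I * t) / 2‖ = 1 := by
      have h2 : ((Complex.normSq ((1 + (r:ℂ) ^ 6 + I * t) / 2) : ℝ) : ℂ) = 1 := by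
        rw [← Complex.mul_conj, hconj, hwprod]
      have h3 : Complex.normSq ((1 + (r:ℂ) ^ 6 + I * t) / 2) = 1 := by
        exact_mod_cast h2
      rw [Complex.norm_def, h3, Real.sqrt_one]
    have habsw' : ‖(1 + (r:ℂ) ^ 6 - I * t) / 2‖ = 1 := by
      have h2 : ((Complex.normSq ((1 + (r:ℂ) ^ 6 - I * t) / 2) : ℝ) : ℂ) = 1 := by
        rw [← Complex.mul_conj]
        have hconj' : (starRingEnd ℂ) ((1 + (r:ℂ) ^ 6 - I * t) / 2)
            = (1 + (r:ℂ) ^ 6 + I * t) / 2 := by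
          rw [htdef]
          simp [map_div₀, map_add, map_mul, conj_I, Complex.conj_ofReal, map_ofNat]
        rw [hconj']
        linear_combination hwprod
      have h3 : Complex.normSq ((1 + (r:ℂ) ^ 6 - I * t) / 2) = 1 := by
        exact_mod_cast h2
      rw [Complex.norm_def, h3, Real.sqrt_one]
    rcases hcube with h1 | h1 | h1
    · rw [h1]; simp
    · rw [h1]; exact habsw
    · rw [h1]; exact habsw'
  have hnn := norm_nonneg ζ
  nlinarith [sq_nonneg (‖ζ‖ - 1), sq_nonneg (‖ζ‖ + 1)]
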